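/- Let E be a directed graph with an exclusive cycle c and v a vertex on c. Let Y be the set of formal elements pq* with p, q paths in E, r(p) = r(q) ∈ c⁰, and s(q) = v. Then in any element pq* ∈ Y the path q lies entirely in the cycle c. -/

import Mathlib

/-- A directed graph with vertex set `V`, edge set `E`, source map `s` and range map `r`. -/
structure DiGraph where
  V : Type
  E : Type
  s : E → V
  r : E → V

namespace DiGraph

variable (G : DiGraph)

/-- There is an edge from `u` to `w`. -/
def Step (u w : G.V) : Prop := ∃ e : G.E, G.s e = u ∧ G.r e = w

/-- `G.Reach u w` means `u ≥ w`: there is a (possibly trivial) directed path from `u` to `w`. -/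
def Reach (u w : G.V) : Prop := Relation.ReflTransGen G.Step u w

/-- The root `R(W)` of a set of vertices `W`. -/
def root (W : Set G.V) : Set G.V := {u | ∃ w ∈ W, G.Reach u w}

/-- A set `H` of vertices is hereditary if `u ∈ H` and `u ≥ w` imply `w ∈ H`. -/
def Hereditary (H : Set G.V) : Prop := ∀ u ∈ H, ∀ w, G.Reach u w → w ∈ H

/-- A vertex is regular if it emits at least one and only finitely many edges. -/
def Regular (v : G.V) : Prop := (G.s ⁻¹' {v}).Nonempty ∧ (G.s ⁻¹' {v}).Finite

/-- A set `H` is saturated if every regular vertex all of whose out-edges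
have ranges in `H` lies in `H`. -/
def Saturated (H : Set G.V) : Prop :=
  ∀ v, G.Regular v → (∀ e, G.s e = v → G.r e ∈ H) → v ∈ H

/-- A set of vertices is downwards directed if every two of its elements have a
common lower bound in it. -/
def DownDirected (W : Set G.V) : Prop :=
  ∀ u ∈ W, ∀ v ∈ W, ∃ w ∈ W, G.Reach u w ∧ G.Reach v w

/-- The Countable Separation Property of a set of vertices. -/
def CSP (W : Set G.V) : Prop := ∃ C : Set G.V, C.Countable ∧ W ⊆ G.root C

/-- The Inner Countable Separation Property of a set of vertices. -/
def ICSP (W : Set G.V) : Prop := ∃ C : Set G.V, C.Countable ∧ C ⊆ W ∧ W ⊆ G.root C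

/-- `G.IsPathFrom v l` : the list of edges `l` forms a directed path starting at `v`. -/
def IsPathFrom : (G : DiGraph) → G.V → List G.E → Prop
  | _, _, [] => True
  | G, v, e :: es => G.s e = v ∧ G.IsPathFrom (G.r e) es

/-- The end (range) vertex of a path `l` starting at `v`. -/
def pathEnd : (G : DiGraph) → G.V → List G.E → G.V
  | _, v, [] => v
  | G, _, e :: es => G.pathEnd (G.r e) es

/-- The set of vertices on a path `l` starting at `v`. -/
def pathVerts (v : G.V) (l : List G.E) : Set G.V := insert v {w | ∃ e ∈ l, G.r e = w}

/-- A cycle based at `v` : a nonempty closed path in which distinct edges have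
distinct sources. -/
def IsCycle (v : G.V) (l : List G.E) : Prop :=
  l ≠ [] ∧ G.IsPathFrom v l ∧ G.pathEnd v l = v ∧ (l.map G.s).Nodup

/-- A cycle is exclusive if no vertex on it is the base of a cycle distinct from it
(cycles being identified with their sets of edges). -/
def ExclusiveCycle (v : G.V) (l : List G.E) : Prop :=
  G.IsCycle v l ∧ ∀ u ∈ G.pathVerts v l, ∀ m, G.IsCycle u m → (∀ e, e ∈ m ↔ e ∈ l)

open Classical in
/-- Auxiliary reduction on reversed edge lists: cancel common initial segments. -/
noncomputable def redAux (G : DiGraph) : List G.E → List G.E → List G.E × List G.E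
  | a :: as, b :: bs => if a = b then redAux G as bs else (a :: as, b :: bs)
  | as, bs => (as, bs)

/-- The reduction function: `red (p, q)` cancels the common final edges of the
paths `p` and `q`, implementing `red(ee*q*) = q*` and `red(pee*q*) = red(pq*)`. -/
noncomputable def red (p q : List G.E) : List G.E × List G.E :=
  ((G.redAux p.reverse q.reverse).1.reverse, (G.redAux p.reverse q.reverse).2.reverse)

/-- The source vertex of an element `pq*` (with `q` a path starting at the base
vertex `v`): the source of `p` if `p` is nonempty, and `r(q)` otherwise. -/
def startVtx (v : G.V) : List G.E × List G.E → G.V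
  | ([], q) => G.pathEnd v q
  | (e :: _, _) => G.s e

/-- Membership in the set `Y` associated to a cycle `c` (based at `cv`, with edges
`cl`) and a vertex `v ∈ c⁰`: pairs `(p, q)` of paths with `r(p) = r(q) ∈ c⁰` and
`s(q) = v`. -/
def MemY (cv : G.V) (cl : List G.E) (v : G.V) (x : List G.E × List G.E) : Prop :=
  G.IsPathFrom (G.startVtx v x) x.1 ∧ G.IsPathFrom v x.2 ∧
    G.pathEnd (G.startVtx v x) x.1 = G.pathEnd v x.2 ∧
    G.pathEnd v x.2 ∈ G.pathVerts cv cl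

/-- The degree `|p| − |q|` of an element `pq*`. -/
def degOf (G : DiGraph) (x : List G.E × List G.E) : ℤ :=
  (x.1.length : ℤ) - (x.2.length : ℤ)

/-- The branching system `X`: reduced elements of `Y`. -/
def Xset (cv : G.V) (cl : List G.E) (v : G.V) : Set (List G.E × List G.E) :=
  {x | G.MemY cv cl v x ∧ G.red x.1 x.2 = x}

/-- The subset `X_w` of `X` of elements with source vertex `w`. -/
def Xvtx (cv : G.V) (cl : List G.E) (v : G.V) (w : G.V) : Set (List G.E × List G.E) :=
  {x ∈ G.Xset cv cl v | G.startVtx v x = w}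

/-- The subset `X_e` of `X` of elements of the form `red(e r s*)` with `e r s* ∈ Y`. -/
def Xedge (cv : G.V) (cl : List G.E) (v : G.V) (e : G.E) : Set (List G.E × List G.E) :=
  {x | ∃ rs : List G.E × List G.E, G.MemY cv cl v (e :: rs.1, rs.2) ∧
    x = G.red (e :: rs.1) rs.2}

/-- The map `σ_e : X_{r(e)} → X_e`, `pq* ↦ red(e p q*)`. -/
noncomputable def sigmaE (e : G.E) (x : List G.E × List G.E) : List G.E × List G.E :=
  G.red (e :: x.1) x.2

@[simp] lemma pathEnd_nil (v : G.V) : G.pathEnd v [] = v := by rw [pathEnd]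

@[simp] lemma pathEnd_cons (v : G.V) (e : G.E) (l : List G.E) :
    G.pathEnd v (e :: l) = G.pathEnd (G.r e) l := by rw [pathEnd]

@[simp] lemma isPathFrom_nil (v : G.V) : G.IsPathFrom v [] := by
  rw [IsPathFrom]; trivial

@[simp] lemma isPathFrom_cons {v : G.V} {e : G.E} {l : List G.E} :
    G.IsPathFrom v (e :: l) ↔ G.s e = v ∧ G.IsPathFrom (G.r e) l := by
  rw [IsPathFrom]

lemma pathEnd_append (v : G.V) (l1 l2 : List G.E) :
    G.pathEnd v (l1 ++ l2) = G.pathEnd (G.pathEnd v l1) l2 := by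
  induction l1 generalizing v with
  | nil => simp
  | cons e t ih => simp [ih]

lemma isPathFrom_append {v : G.V} {l1 l2 : List G.E} :
    G.IsPathFrom v (l1 ++ l2) ↔
      G.IsPathFrom v l1 ∧ G.IsPathFrom (G.pathEnd v l1) l2 := by
  induction l1 generalizing v with
  | nil => simp
  | cons e t ih => simp [ih, and_assoc]

lemma exists_dup_split (l : List G.E) (h : ¬ (l.map G.s).Nodup) :
    ∃ a f b g c, l = a ++ f :: b ++ g :: c ∧ G.s f = G.s g := by
  induction l with
  | nil => simp at h
  | cons e t ih =>
    by_cases hmem : ∃ g ∈ t, G.s g = G.s e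
    · obtain ⟨g, hg, hs⟩ := hmem
      obtain ⟨b, c, rfl⟩ := List.append_of_mem hg
      exact ⟨[], e, b, g, c, by simp, hs.symm⟩
    · have ht : ¬ (t.map G.s).Nodup := by
        intro hnd
        apply h
        simp only [List.map_cons, List.nodup_cons]
        refine ⟨?_, hnd⟩
        intro hx
        obtain ⟨g, hg, hgs⟩ := List.mem_map.mp hx
        exact hmem ⟨g, hg, hgs⟩
      obtain ⟨a, f, b, g, c, heq, hs⟩ := ih ht
      exact ⟨e :: a, f, b, g, c, by simp [heq], hs⟩

lemma extract_cycle (v : G.V) :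
    ∀ n (e : G.E) (l : List G.E), (e :: l).length ≤ n →
      G.IsPathFrom v (e :: l) → G.pathEnd v (e :: l) = v →
      ∃ m, G.IsCycle v m ∧ e ∈ m ∧ ∀ f ∈ m, f ∈ e :: l := by
  intro n
  induction n with
  | zero => intro e l hlen; simp at hlen
  | succ n ih =>
    intro e l hlen hp hend
    by_cases hnd : ((e :: l).map G.s).Nodup
    · exact ⟨e :: l, ⟨List.cons_ne_nil _ _, hp, hend, hnd⟩,
        List.mem_cons_self, fun f hf => hf⟩
    · obtain ⟨a, f, b, g, c, heq, hs⟩ := G.exists_dup_split _ hnd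
      obtain ⟨hev, hp2⟩ := G.isPathFrom_cons.mp hp
      cases a with
      | nil =>
        simp only [List.nil_append, List.cons.injEq] at heq
        obtain ⟨rfl, rfl⟩ := heq
        simp only [List.append_eq] at hp2 hlen
        have hsplit := (G.isPathFrom_append).mp hp2
        have hsg : G.s g = G.pathEnd (G.r e) b :=
          (G.isPathFrom_cons.mp hsplit.2).1
        have hend' : G.pathEnd v (e :: b) = v := by
          rw [G.pathEnd_cons, ← hsg, ← hs, hev]
        have hpath' : G.IsPathFrom v (e :: b) :=
          G.isPathFrom_cons.mpr ⟨hev, hsplit.1⟩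
        have hlen' : (e :: b).length ≤ n := by
          simp only [List.length_cons, List.length_append] at hlen ⊢
          omega
        obtain ⟨m, hm, hem, hsub⟩ := ih e b hlen' hpath' hend'
        refine ⟨m, hm, hem, fun x hx => ?_⟩
        have := hsub x hx
        simp only [List.mem_cons, List.mem_append, List.append_eq] at this ⊢
        tauto
      | cons e a' =>
        simp only [List.cons_append, List.cons.injEq] at heq
        obtain ⟨rfl, rfl⟩ := heq
        rw [show a' ++ f :: b ++ g :: c = a' ++ ((f :: b) ++ g :: c) by simp]
          at hp2
        have h1 := (G.isPathFrom_append).mp hp2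
        have h2 := (G.isPathFrom_append).mp h1.2
        have hsf : G.s f = G.pathEnd (G.r e) a' :=
          (G.isPathFrom_cons.mp h2.1).1
        have hsg2 := (G.isPathFrom_cons.mp h2.2).1
        have hgpath : G.IsPathFrom (G.r g) c :=
          (G.isPathFrom_cons.mp h2.2).2
        have hpath' : G.IsPathFrom v (e :: (a' ++ g :: c)) := by
          refine G.isPathFrom_cons.mpr ⟨hev, (G.isPathFrom_append).mpr
            ⟨h1.1, G.isPathFrom_cons.mpr ⟨?_, hgpath⟩⟩⟩
          rw [← hs, hsf]
        have hend' : G.pathEnd v (e :: (a' ++ g :: c)) = v := by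
          simp only [pathEnd_cons, pathEnd_append] at hend ⊢
          exact hend
        have hlen' : (e :: (a' ++ g :: c)).length ≤ n := by
          simp only [List.length_cons, List.length_append] at hlen ⊢
          omega
        obtain ⟨m, hm, hem, hsub⟩ := ih e (a' ++ g :: c) hlen' hpath' hend'
        refine ⟨m, hm, hem, fun x hx => ?_⟩
        have := hsub x hx
        simp only [List.mem_cons, List.mem_append] at this ⊢
        tauto

lemma path_from_base {cv : G.V} {cl : List G.E} (hc : G.IsCycle cv cl)
    {w : G.V} (hw : w ∈ G.pathVerts cv cl) :
    ∃ t, (∀ f ∈ t, f ∈ cl) ∧ G.IsPathFrom cv t ∧ G.pathEnd cv t = w := by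
  rcases hw with rfl | ⟨e, he, rfl⟩
  · exact ⟨[], by simp, G.isPathFrom_nil _, G.pathEnd_nil _⟩
  · obtain ⟨a, b, heq⟩ := List.append_of_mem he
    have hpath : G.IsPathFrom cv ((a ++ [e]) ++ b) := by
      rw [show (a ++ [e]) ++ b = a ++ e :: b by simp]
      rw [← heq]; exact hc.2.1
    have h1 := (G.isPathFrom_append).mp hpath
    refine ⟨a ++ [e], ?_, h1.1, ?_⟩
    · intro f hf
      rw [heq]
      simp only [List.mem_append, List.mem_singleton, List.mem_cons] at hf ⊢
      tauto
    · simp [pathEnd_append]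

lemma path_to_base {cv : G.V} {cl : List G.E} (hc : G.IsCycle cv cl)
    {u : G.V} (hu : u ∈ G.pathVerts cv cl) :
    ∃ t, (∀ f ∈ t, f ∈ cl) ∧ G.IsPathFrom u t ∧ G.pathEnd u t = cv := by
  rcases hu with rfl | ⟨e, he, rfl⟩
  · exact ⟨[], by simp, G.isPathFrom_nil _, G.pathEnd_nil _⟩
  · obtain ⟨a, b, heq⟩ := List.append_of_mem he
    have hpath : G.IsPathFrom cv ((a ++ [e]) ++ b) := by
      rw [show (a ++ [e]) ++ b = a ++ e :: b by simp]
      rw [← heq]; exact hc.2.1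
    have h1 := (G.isPathFrom_append).mp hpath
    have hEnd : G.pathEnd cv (a ++ [e]) = G.r e := by
      simp [pathEnd_append]
    refine ⟨b, ?_, hEnd ▸ h1.2, ?_⟩
    · intro f hf; rw [heq]; simp [hf]
    · have := hc.2.2.1
      rw [heq, show a ++ e :: b = (a ++ [e]) ++ b by simp,
        G.pathEnd_append, hEnd] at this
      exact this

lemma exclusive_path_subset {cv : G.V} {cl : List G.E}
    (hc : G.ExclusiveCycle cv cl) :
    ∀ (q : List G.E) (v : G.V), v ∈ G.pathVerts cv cl →
      G.IsPathFrom v q → G.pathEnd v q ∈ G.pathVerts cv cl →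
      ∀ e ∈ q, e ∈ cl := by
  intro q
  induction q with
  | nil => simp
  | cons e q' ih =>
    intro v hv hp hend f hf
    obtain ⟨hev, hp2⟩ := G.isPathFrom_cons.mp hp
    obtain ⟨t1, ht1c, ht1p, ht1e⟩ := G.path_to_base hc.1 hend
    obtain ⟨t2, ht2c, ht2p, ht2e⟩ := G.path_from_base hc.1 hv
    rw [G.pathEnd_cons] at ht1p ht1e
    have hwpath : G.IsPathFrom v (e :: (q' ++ (t1 ++ t2))) := by
      refine G.isPathFrom_cons.mpr ⟨hev, (G.isPathFrom_append).mpr ⟨hp2, ?_⟩⟩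
      refine (G.isPathFrom_append).mpr ⟨ht1p, ?_⟩
      rw [ht1e]; exact ht2p
    have hwend : G.pathEnd v (e :: (q' ++ (t1 ++ t2))) = v := by
      rw [G.pathEnd_cons, G.pathEnd_append, G.pathEnd_append, ht1e, ht2e]
    obtain ⟨m, hm, hem, _⟩ := G.extract_cycle v
      (e :: (q' ++ (t1 ++ t2))).length e (q' ++ (t1 ++ t2)) le_rfl
      hwpath hwend
    have hecl : e ∈ cl := (hc.2 v hv m hm e).mp hem
    rcases List.mem_cons.mp hf with rfl | hf'
    · exact hecl
    · have hre : G.r e ∈ G.pathVerts cv cl := Or.inr ⟨e, hecl, rfl⟩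
      rw [G.pathEnd_cons] at hend
      exact ih (G.r e) hre hp2 hend f hf'

/-- In any element `pq* ∈ Y` associated to an exclusive cycle `c` and `v ∈ c⁰`,
the path `q` lies entirely in `c`. -/
theorem memY_snd_subset_cycle (G : DiGraph) (cv : G.V) (cl : List G.E)
    (hc : G.ExclusiveCycle cv cl) (v : G.V) (hv : v ∈ G.pathVerts cv cl)
    (x : List G.E × List G.E) (hx : G.MemY cv cl v x) :
    ∀ e ∈ x.2, e ∈ cl :=
  G.exclusive_path_subset hc x.2 v hv hx.2.1 hx.2.2.2

end DiGraph
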